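/- If l_1,…,l_m ∈ H' are linearly independent, then for every σ ∈ ℝ^n_+ the matrix 𝓕(σ) is positive definite, i.e., gᵀ 𝓕(σ) g > 0 for all nonzero g ∈ ℝ^m. -/
import Mathlib


open scoped BigOperators

/-- If `l_1,…,l_m ∈ H'` are linearly independent, then for every
`σ ∈ ℝ^n_+` the matrix `𝓕(σ)` is positive definite, i.e., `gᵀ 𝓕(σ) g > 0` for
all nonzero `g ∈ ℝ^m`. -/
theorem stmt_9
    {H : Type*} [NormedAddCommGroup H] [InnerProductSpace ℝ H] [CompleteSpace H]
    {n m : ℕ}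
    (b0 : H →L[ℝ] H →L[ℝ] ℝ) (b : Fin n → H →L[ℝ] H →L[ℝ] ℝ)
    (hb0symm : ∀ u v : H, b0 u v = b0 v u)
    (hb0pos : ∀ v : H, 0 ≤ b0 v v)
    (hbsymm : ∀ i, ∀ u v : H, b i u v = b i v u)
    (hbpos : ∀ i, ∀ v : H, 0 ≤ b i v v)
    (C β : ℝ) (hβ : 0 < β) (hCβ : β ≤ C)
    (hcoer : ∀ v : H, β * ‖v‖ ^ 2 ≤ b0 v v + ∑ i, b i v v)
    (hbound : ∀ v : H, b0 v v + ∑ i, b i v v ≤ C * ‖v‖ ^ 2)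
    (u : (Fin n → ℝ) → (H →L[ℝ] ℝ) → H)
    (hu : ∀ σ : Fin n → ℝ, (∀ i, 0 < σ i) → ∀ l : H →L[ℝ] ℝ,
      ∀ v : H, b0 (u σ l) v + ∑ i, σ i * b i (u σ l) v = l v)
    (l : Fin m → (H →L[ℝ] ℝ))
    (hli : LinearIndependent ℝ l) :
    ∀ σ : Fin n → ℝ, (∀ i, 0 < σ i) →
      ∀ g : Fin m → ℝ, g ≠ 0 →
        0 < ∑ j, ∑ k, g j * (l k (u σ (l j))) * g k := by
  intro σ hσ g hg
  set w : H := ∑ j, g j • u σ (l j) with hw_def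
  -- b_σ(w, v) = ∑ j, g j * l j v
  have hw : ∀ v : H, b0 w v + ∑ i, σ i * b i w v = ∑ j, g j * l j v := by
    intro v
    have hb0w : b0 w v = ∑ j, g j * b0 (u σ (l j)) v := by
      simp [hw_def, map_sum, ContinuousLinearMap.sum_apply, ContinuousLinearMap.smul_apply,
        smul_eq_mul]
    have hbw : ∀ i, b i w v = ∑ j, g j * b i (u σ (l j)) v := by
      intro i
      simp [hw_def, map_sum, ContinuousLinearMap.sum_apply, ContinuousLinearMap.smul_apply,
        smul_eq_mul]
    calc b0 w v + ∑ i, σ i * b i w v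
        = ∑ j, g j * b0 (u σ (l j)) v + ∑ i, ∑ j, σ i * (g j * b i (u σ (l j)) v) := by
          rw [hb0w]; congr 1; refine Finset.sum_congr rfl fun i _ => ?_
          rw [hbw i, Finset.mul_sum]
      _ = ∑ j, g j * (b0 (u σ (l j)) v + ∑ i, σ i * b i (u σ (l j)) v) := by
          rw [Finset.sum_comm (γ := Fin n)]
          rw [← Finset.sum_add_distrib]
          refine Finset.sum_congr rfl fun j _ => ?_
          rw [mul_add, Finset.mul_sum]
          ring_nf
      _ = ∑ j, g j * l j v := by
          refine Finset.sum_congr rfl fun j _ => ?_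
          rw [hu σ hσ (l j) v]
  -- total equals b_σ(w,w)
  have hS : ∑ j, ∑ k, g j * (l k (u σ (l j))) * g k
      = b0 w w + ∑ i, σ i * b i w w := by
    rw [hw w]
    rw [Finset.sum_comm]
    refine Finset.sum_congr rfl fun j _ => ?_
    have : l j w = ∑ k, g k * l j (u σ (l k)) := by
      simp [hw_def, map_sum, smul_eq_mul]
    rw [this, Finset.mul_sum]
    refine Finset.sum_congr rfl fun k _ => ?_
    ring
  rw [hS]
  -- nonnegativity and strictness
  have hnn : 0 ≤ b0 w w + ∑ i, σ i * b i w w :=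
    add_nonneg (hb0pos w) (Finset.sum_nonneg fun i _ =>
      mul_nonneg (hσ i).le (hbpos i w))
  rcases lt_or_eq_of_le hnn with h | h
  · exact h
  · exfalso
    -- each term is zero
    have hsum0 : b0 w w = 0 ∧ ∑ i, σ i * b i w w = 0 := by
      constructor
      · nlinarith [Finset.sum_nonneg (fun i (_ : i ∈ Finset.univ) =>
          mul_nonneg (hσ i).le (hbpos i w)), hb0pos w]
      · nlinarith [Finset.sum_nonneg (fun i (_ : i ∈ Finset.univ) =>
          mul_nonneg (hσ i).le (hbpos i w)), hb0pos w]
    have hbi0 : ∀ i ∈ Finset.univ, σ i * b i w w = 0 := by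
      rw [← Finset.sum_eq_zero_iff_of_nonneg
        (fun i _ => mul_nonneg (hσ i).le (hbpos i w))]
      exact hsum0.2
    have hbi0' : ∀ i, b i w w = 0 := fun i => by
      have := hbi0 i (Finset.mem_univ i)
      exact (mul_eq_zero.mp this).resolve_left (hσ i).ne'
    have hw0 : w = 0 := by
      have h1 := hcoer w
      rw [hsum0.1] at h1
      simp only [hbi0'] at h1
      simp only [Finset.sum_const_zero, add_zero] at h1
      have : ‖w‖ ^ 2 ≤ 0 := by nlinarith
      have : ‖w‖ = 0 := by nlinarith [sq_nonneg ‖w‖, norm_nonneg w]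
      exact norm_eq_zero.mp this
    -- then ∑ g j • l j = 0, contradicting linear independence
    have hL0 : ∑ j, g j • l j = (0 : H →L[ℝ] ℝ) := by
      ext v
      have := hw v
      rw [hw0] at this
      simp only [map_zero, ContinuousLinearMap.zero_apply, Finset.mul_sum] at this
      simp only [ContinuousLinearMap.sum_apply, ContinuousLinearMap.smul_apply,
        smul_eq_mul, ContinuousLinearMap.zero_apply]
      rw [← this]
      simp
    have := linearIndependent_iff'.mp hli Finset.univ g hL0
    exact hg (funext fun j => this j (Finset.mem_univ j))
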